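/- Suppose f₁ and f₀ are ℓ1-Lipschitz with constants L₁ and L₀, and suppose L_AA2 := max over 0 ≤ Δ ≤ π ≤ 1 of [2·(π·L₁ + (1−π)·L₀) + |f₁(Δ, π−Δ) − f₀(Δ, π−Δ)|] satisfies L_AA2 < 1. For the joint AA2 discrete-time dynamics a_{t+1} = G_A(a_t, b_t), b_{t+1} = G_B(a_t, b_t) (with the roles of the two coordinates swapped at any step where b_t > a_t), one has |G_A(π,π′) − G_B(π,π′)| ≤ L_AA2·|π − π′| for all π ≥ π′ in [0,1]; consequently |a_t − b_t| ≤ L_AA2^t·|a₀ − b₀| → 0 as t → ∞, i.e., society equalizes under AA2. -/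
import Mathlib


open Filter Set Topology

/-- society equalizes under AA2.
The AA2 one-step maps are `G_A(π,π') = π·f₁(0,π) + (1−π)·f₀(0,π)` (advantaged group) and
`G_B(π,π') = π'·f₁(π−π',π') + (1−π')·f₀(π−π',π')` (disadvantaged group), where `π ≥ π'`.
If `f₁`, `f₀` are ℓ1-Lipschitz with constants `L₁`, `L₀`, and
`L_AA2 := max_{0 ≤ Δ ≤ π ≤ 1} [2·(π·L₁ + (1−π)·L₀) + |f₁(Δ,π−Δ) − f₀(Δ,π−Δ)|] < 1`, then
`|G_A(π,π') − G_B(π,π')| ≤ L_AA2·|π − π'|` for all `π ≥ π'` in `[0,1]`, and for the joint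
trajectories (with the roles of the coordinates swapped at any step where `b_t > a_t`)
`|a_t − b_t| ≤ L_AA2^t·|a₀ − b₀| → 0`. -/
theorem AA2_equalizes
    (f₀ f₁ : ℝ → ℝ → ℝ) (L₀ L₁ LAA2 : ℝ)
    (hmap0 : ∀ x ∈ Set.Icc (0:ℝ) 1, ∀ y ∈ Set.Icc (0:ℝ) 1, f₀ x y ∈ Set.Icc (0:ℝ) 1)
    (hmap1 : ∀ x ∈ Set.Icc (0:ℝ) 1, ∀ y ∈ Set.Icc (0:ℝ) 1, f₁ x y ∈ Set.Icc (0:ℝ) 1)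
    (hlip1 : ∀ x₁ ∈ Set.Icc (0:ℝ) 1, ∀ x₂ ∈ Set.Icc (0:ℝ) 1,
        ∀ y₁ ∈ Set.Icc (0:ℝ) 1, ∀ y₂ ∈ Set.Icc (0:ℝ) 1,
        |f₁ x₁ x₂ - f₁ y₁ y₂| ≤ L₁ * (|x₁ - y₁| + |x₂ - y₂|))
    (hlip0 : ∀ x₁ ∈ Set.Icc (0:ℝ) 1, ∀ x₂ ∈ Set.Icc (0:ℝ) 1,
        ∀ y₁ ∈ Set.Icc (0:ℝ) 1, ∀ y₂ ∈ Set.Icc (0:ℝ) 1,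
        |f₀ x₁ x₂ - f₀ y₁ y₂| ≤ L₀ * (|x₁ - y₁| + |x₂ - y₂|))
    (hLAA2 : ∀ Δ π : ℝ, 0 ≤ Δ → Δ ≤ π → π ≤ 1 →
        2 * (π * L₁ + (1 - π) * L₀) + |f₁ Δ (π - Δ) - f₀ Δ (π - Δ)| ≤ LAA2)
    (hLAA2lt : LAA2 < 1)
    (GA GB : ℝ → ℝ → ℝ)
    (hGA : ∀ π π', GA π π' = π * f₁ 0 π + (1 - π) * f₀ 0 π)
    (hGB : ∀ π π', GB π π' = π' * f₁ (π - π') π' + (1 - π') * f₀ (π - π') π')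
    (a b : ℕ → ℝ)
    (ha0 : a 0 ∈ Set.Icc (0:ℝ) 1) (hb0 : b 0 ∈ Set.Icc (0:ℝ) 1)
    (ha : ∀ t, a (t + 1) = if b t ≤ a t then GA (a t) (b t) else GB (b t) (a t))
    (hb : ∀ t, b (t + 1) = if b t ≤ a t then GB (a t) (b t) else GA (b t) (a t)) :
    (∀ π ∈ Set.Icc (0:ℝ) 1, ∀ π' ∈ Set.Icc (0:ℝ) 1, π' ≤ π →
        |GA π π' - GB π π'| ≤ LAA2 * |π - π'|) ∧
    (∀ t, |a t - b t| ≤ LAA2 ^ t * |a 0 - b 0|) ∧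
    Filter.Tendsto (fun t => |a t - b t|) Filter.atTop (nhds 0) := by

  have h0 : (0:ℝ) ∈ Set.Icc (0:ℝ) 1 := ⟨le_refl 0, zero_le_one⟩
  have h1 : (1:ℝ) ∈ Set.Icc (0:ℝ) 1 := ⟨zero_le_one, le_refl 1⟩
  have hL1 : 0 ≤ L₁ := by
    have := hlip1 0 h0 0 h0 0 h0 1 h1
    simp at this
    calc (0:ℝ) ≤ |f₁ 0 0 - f₁ 0 1| := abs_nonneg _
      _ ≤ L₁ := this
  have hLAA2nn : 0 ≤ LAA2 := by
    have := hLAA2 0 1 le_rfl zero_le_one le_rfl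
    have h2 : (0:ℝ) ≤ |f₁ 0 (1 - 0) - f₀ 0 (1 - 0)| := abs_nonneg _
    nlinarith
  -- key one-step contraction
  have key : ∀ π ∈ Set.Icc (0:ℝ) 1, ∀ π' ∈ Set.Icc (0:ℝ) 1, π' ≤ π →
      |GA π π' - GB π π'| ≤ LAA2 * |π - π'| := by
    intro π hπ π' hπ' hle
    rw [hGA, hGB]
    have hΔ0 : 0 ≤ π - π' := by linarith
    have hΔ1 : π - π' ≤ 1 := by
      have := hπ.2; have := hπ'.1; linarith
    have hΔmem : π - π' ∈ Set.Icc (0:ℝ) 1 := ⟨hΔ0, hΔ1⟩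
    have hd1 : |f₁ 0 π - f₁ (π - π') π'| ≤ L₁ * ((π - π') + (π - π')) := by
      have := hlip1 0 h0 π hπ (π - π') hΔmem π' hπ'
      have e1 : |(0:ℝ) - (π - π')| = π - π' := by rw [abs_sub_comm]; simpa using abs_of_nonneg hΔ0
      have e2 : |π - π'| = π - π' := abs_of_nonneg hΔ0
      rw [e1, e2] at this
      exact this
    have hd0 : |f₀ 0 π - f₀ (π - π') π'| ≤ L₀ * ((π - π') + (π - π')) := by
      have := hlip0 0 h0 π hπ (π - π') hΔmem π' hπ'
      have e1 : |(0:ℝ) - (π - π')| = π - π' := by rw [abs_sub_comm]; simpa using abs_of_nonneg hΔ0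
      have e2 : |π - π'| = π - π' := abs_of_nonneg hΔ0
      rw [e1, e2] at this
      exact this
    have hmax := hLAA2 (π - π') π hΔ0 (by linarith [hπ'.1]) hπ.2
    have hπ'eq : π - (π - π') = π' := by ring
    rw [hπ'eq] at hmax
    have decomp : π * f₁ 0 π + (1 - π) * f₀ 0 π -
        (π' * f₁ (π - π') π' + (1 - π') * f₀ (π - π') π')
        = π * (f₁ 0 π - f₁ (π - π') π') + (1 - π) * (f₀ 0 π - f₀ (π - π') π')
          + (π - π') * (f₁ (π - π') π' - f₀ (π - π') π') := by ring
    rw [decomp]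
    have habs : |π * (f₁ 0 π - f₁ (π - π') π') + (1 - π) * (f₀ 0 π - f₀ (π - π') π')
          + (π - π') * (f₁ (π - π') π' - f₀ (π - π') π')|
        ≤ π * |f₁ 0 π - f₁ (π - π') π'| + (1 - π) * |f₀ 0 π - f₀ (π - π') π'|
          + (π - π') * |f₁ (π - π') π' - f₀ (π - π') π'| := by
      calc _ ≤ |π * (f₁ 0 π - f₁ (π - π') π') + (1 - π) * (f₀ 0 π - f₀ (π - π') π')|
            + |(π - π') * (f₁ (π - π') π' - f₀ (π - π') π')| := abs_add_le _ _
        _ ≤ |π * (f₁ 0 π - f₁ (π - π') π')| + |(1 - π) * (f₀ 0 π - f₀ (π - π') π')|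
            + |(π - π') * (f₁ (π - π') π' - f₀ (π - π') π')| := by
              gcongr; exact abs_add_le _ _
        _ = _ := by
              rw [abs_mul, abs_mul, abs_mul, abs_of_nonneg hπ.1,
                abs_of_nonneg (by linarith [hπ.2] : (0:ℝ) ≤ 1 - π), abs_of_nonneg hΔ0]
    have e2 : |π - π'| = π - π' := abs_of_nonneg hΔ0
    rw [e2]
    refine habs.trans ?_
    have b1 : π * |f₁ 0 π - f₁ (π - π') π'| ≤ π * (L₁ * ((π - π') + (π - π'))) :=
      mul_le_mul_of_nonneg_left hd1 hπ.1
    have b0 : (1 - π) * |f₀ 0 π - f₀ (π - π') π'| ≤ (1 - π) * (L₀ * ((π - π') + (π - π'))) :=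
      mul_le_mul_of_nonneg_left hd0 (by linarith [hπ.2])
    nlinarith [hΔ0, abs_nonneg (f₁ (π - π') π' - f₀ (π - π') π')]
  -- range invariance of GA, GB
  have hGAmem : ∀ π ∈ Set.Icc (0:ℝ) 1, ∀ π' ∈ Set.Icc (0:ℝ) 1, π' ≤ π →
      GA π π' ∈ Set.Icc (0:ℝ) 1 := by
    intro π hπ π' hπ' _
    rw [hGA]
    have hm1 := hmap1 0 h0 π hπ
    have hm0 := hmap0 0 h0 π hπ
    constructor
    · nlinarith [hπ.1, hπ.2, hm1.1, hm0.1]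
    · nlinarith [hπ.1, hπ.2, hm1.2, hm0.2]
  have hGBmem : ∀ π ∈ Set.Icc (0:ℝ) 1, ∀ π' ∈ Set.Icc (0:ℝ) 1, π' ≤ π →
      GB π π' ∈ Set.Icc (0:ℝ) 1 := by
    intro π hπ π' hπ' hle
    rw [hGB]
    have hΔmem : π - π' ∈ Set.Icc (0:ℝ) 1 := ⟨by linarith, by linarith [hπ.2, hπ'.1]⟩
    have hm1 := hmap1 (π - π') hΔmem π' hπ'
    have hm0 := hmap0 (π - π') hΔmem π' hπ'
    constructor
    · nlinarith [hπ'.1, hπ'.2, hm1.1, hm0.1]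
    · nlinarith [hπ'.1, hπ'.2, hm1.2, hm0.2]
  -- invariant by induction
  have inv : ∀ t, a t ∈ Set.Icc (0:ℝ) 1 ∧ b t ∈ Set.Icc (0:ℝ) 1 ∧
      |a t - b t| ≤ LAA2 ^ t * |a 0 - b 0| := by
    intro t
    induction t with
    | zero => exact ⟨ha0, hb0, by simp⟩
    | succ t ih =>
      obtain ⟨hat, hbt, hdt⟩ := ih
      rw [ha t, hb t]
      by_cases hc : b t ≤ a t
      · simp only [hc, if_true]
        have hk := key (a t) hat (b t) hbt hc
        have habdiff : |a t - b t| = a t - b t := abs_of_nonneg (by linarith)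
        refine ⟨hGAmem (a t) hat (b t) hbt hc, hGBmem (a t) hat (b t) hbt hc, ?_⟩
        calc |GA (a t) (b t) - GB (a t) (b t)| ≤ LAA2 * |a t - b t| := hk
          _ ≤ LAA2 * (LAA2 ^ t * |a 0 - b 0|) := mul_le_mul_of_nonneg_left hdt hLAA2nn
          _ = LAA2 ^ (t + 1) * |a 0 - b 0| := by ring
      · simp only [hc, if_false]
        have hle : a t ≤ b t := le_of_not_ge hc
        have hk := key (b t) hbt (a t) hat hle
        refine ⟨hGBmem (b t) hbt (a t) hat hle, hGAmem (b t) hbt (a t) hat hle, ?_⟩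
        rw [abs_sub_comm]
        calc |GA (b t) (a t) - GB (b t) (a t)| ≤ LAA2 * |b t - a t| := hk
          _ = LAA2 * |a t - b t| := by rw [abs_sub_comm]
          _ ≤ LAA2 * (LAA2 ^ t * |a 0 - b 0|) := mul_le_mul_of_nonneg_left hdt hLAA2nn
          _ = LAA2 ^ (t + 1) * |a 0 - b 0| := by ring
  refine ⟨key, fun t => (inv t).2.2, ?_⟩
  have hgeo : Filter.Tendsto (fun t => LAA2 ^ t * |a 0 - b 0|) Filter.atTop (nhds 0) := by
    have := tendsto_pow_atTop_nhds_zero_of_lt_one hLAA2nn hLAA2lt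
    simpa using this.mul_const |a 0 - b 0|
  exact squeeze_zero (fun t => abs_nonneg _) (fun t => (inv t).2.2) hgeo
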